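/- For every integer l ≥ 2, the set P_l = {0} ∪ {i + k/l^i : i a positive integer, 0 ≤ k < l^i} — that is, the sequence whose i-th period is {i, i + 1/l^i, i + 2/l^i, …, i + (l^i−1)/l^i} — when enumerated in increasing order is a normalized ℝ-mold of granularity l, and it is fractal with first period {1, 1+1/l, …, 1+(l−1)/l}. In particular P_l is closed under addition. -/

import Mathlib

/-- An `ℝ`-mold: a strictly increasing sequence of nonnegative reals starting at `0`,
whose consecutive differences become arbitrarily small, closed under addition. -/
def IsRMold (μ : ℕ → ℝ) : Prop :=
  StrictMono μ ∧ (∀ i, 0 ≤ μ i) ∧ μ 0 = 0 ∧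
    (∀ ε : ℝ, 0 < ε → ∃ n₀ : ℕ, ∀ n ≥ n₀, μ (n + 1) - μ n < ε) ∧
    (∀ i j : ℕ, ∃ k : ℕ, μ k = μ i + μ j)

/-- The `i`-th period of a (normalized) mold `μ`: elements `x` of the mold with `i ≤ x < i + 1`. -/
def period (μ : ℕ → ℝ) (i : ℕ) : Set ℝ :=
  {x | (∃ k, μ k = x) ∧ (i : ℝ) ≤ x ∧ x < (i : ℝ) + 1}

/-- A normalized mold is fractal if its periods can be enumerated as
`π_i = {i + τ^{(i)}_0, …, i + τ^{(i)}_{l_i - 1}}` with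
`0 = τ^{(i)}_0 < ⋯ < τ^{(i)}_{l_i - 1} < τ^{(i)}_{l_i} = 1`, and each period is obtained by
dividing each interval of the previous one in the same proportions as the first period divides
`[0, 1]`:
`π_{i+1} = ⋃_{r < l_i} ⋃_{s < l} {(i+1) + τ^{(i)}_r + τ^{(1)}_s (τ^{(i)}_{r+1} - τ^{(i)}_r)}`. -/
def IsFractal (μ : ℕ → ℝ) : Prop :=
  ∃ (l : ℕ → ℕ) (τ : ℕ → ℕ → ℝ),
    (∀ i, 0 < l i) ∧
    (∀ i, τ i 0 = 0) ∧
    (∀ i, τ i (l i) = 1) ∧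
    (∀ i, ∀ r s : ℕ, r < s → s ≤ l i → τ i r < τ i s) ∧
    (∀ i, period μ i = {x | ∃ r < l i, x = (i : ℝ) + τ i r}) ∧
    (∀ i, period μ (i + 1) =
      {x | ∃ r < l i, ∃ s < l 1, x = ((i : ℝ) + 1) + τ i r + τ 1 s * (τ i (r + 1) - τ i r)})

/-- The set `P_l = {0} ∪ {i + k / l^i : i ≥ 1, 0 ≤ k < l^i}`. -/
def Pset (l : ℕ) : Set ℝ :=
  {0} ∪ {x : ℝ | ∃ i : ℕ, 0 < i ∧ ∃ k : ℕ, k < l ^ i ∧ x = (i : ℝ) + (k : ℝ) / (l : ℝ) ^ i}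

namespace PFM

def pstep (l : ℕ) (p : ℕ × ℕ) : ℕ × ℕ :=
  if p.2 + 1 < l ^ p.1 then (p.1, p.2 + 1) else (p.1 + 1, 0)

def pfun (l : ℕ) : ℕ → ℕ × ℕ
  | 0 => (0, 0)
  | n + 1 => pstep l (pfun l n)

noncomputable def mu (l : ℕ) (n : ℕ) : ℝ :=
  ((pfun l n).1 : ℝ) + ((pfun l n).2 : ℝ) / (l : ℝ) ^ (pfun l n).1

lemma pfun_inv (l : ℕ) (hl : 1 ≤ l) (n : ℕ) : (pfun l n).2 < l ^ (pfun l n).1 := by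
  induction n with
  | zero => simp [pfun]
  | succ n ih =>
    simp only [pfun, pstep]
    split
    · simpa using ‹_›
    · simpa using pow_pos (by omega : 0 < l) ((pfun l n).1 + 1)

lemma mu_succ (l : ℕ) (hl : 1 ≤ l) (n : ℕ) :
    mu l (n + 1) = mu l n + 1 / (l : ℝ) ^ (pfun l n).1 := by
  have hl' : (0:ℝ) < (l:ℝ) := by exact_mod_cast hl
  have hp : (0:ℝ) < (l:ℝ) ^ (pfun l n).1 := pow_pos hl' _
  have hinv := pfun_inv l hl n
  simp only [mu, pfun, pstep]
  by_cases h : (pfun l n).2 + 1 < l ^ (pfun l n).1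
  · rw [if_pos h]
    push_cast
    field_simp
    ring
  · rw [if_neg h]
    have he : (pfun l n).2 + 1 = l ^ (pfun l n).1 := by omega
    have he' : ((pfun l n).2 : ℝ) + 1 = (l:ℝ) ^ (pfun l n).1 := by exact_mod_cast he
    push_cast
    field_simp
    linear_combination (-(l:ℝ) ^ ((pfun l n).1 + 1)) * he'

lemma mu_strictMono (l : ℕ) (hl : 1 ≤ l) : StrictMono (mu l) := by
  apply strictMono_nat_of_lt_succ
  intro n
  rw [mu_succ l hl n]
  have hl' : (0:ℝ) < (l:ℝ) := by exact_mod_cast hl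
  have hp : (0:ℝ) < (l:ℝ) ^ (pfun l n).1 := pow_pos hl' _
  have : 0 < 1 / (l:ℝ) ^ (pfun l n).1 := by positivity
  linarith

lemma pfun_surj (l : ℕ) (hl : 1 ≤ l) : ∀ i : ℕ, ∀ k < l ^ i, ∃ n, pfun l n = (i, k) := by
  intro i
  induction i with
  | zero => intro k hk; rw [pow_zero] at hk; interval_cases k; exact ⟨0, rfl⟩
  | succ i ih =>
    intro k
    induction k with
    | zero =>
      intro _
      have hpos : 1 ≤ l ^ i := Nat.one_le_pow _ _ hl
      obtain ⟨n, hn⟩ := ih (l ^ i - 1) (by omega)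
      refine ⟨n + 1, ?_⟩
      simp only [pfun, pstep, hn]
      rw [if_neg (by simp; omega)]
    | succ k ihk =>
      intro hk
      obtain ⟨n, hn⟩ := ihk (by omega)
      refine ⟨n + 1, ?_⟩
      simp only [pfun, pstep, hn]
      rw [if_pos (by simpa using hk)]

lemma pfun_fst_mono (l : ℕ) : Monotone (fun n => (pfun l n).1) := by
  apply monotone_nat_of_le_succ
  intro n
  simp only [pfun, pstep]
  split <;> simp

lemma mu_zero (l : ℕ) : mu l 0 = 0 := by simp [mu, pfun]

lemma mu_one (l : ℕ) (hl : 1 ≤ l) : mu l 1 = 1 := by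
  have : pfun l 1 = (1, 0) := by
    simp only [pfun, pstep]
    norm_num
  simp [mu, this]

lemma range_mu (l : ℕ) (hl : 1 ≤ l) : Set.range (mu l) = Pset l := by
  ext x
  constructor
  · rintro ⟨n, rfl⟩
    rcases Nat.eq_zero_or_pos (pfun l n).1 with h0 | hpos
    · left
      have hk := pfun_inv l hl n
      rw [h0, pow_zero] at hk
      have : (pfun l n).2 = 0 := by omega
      simp [mu, h0, this]
    · right
      exact ⟨(pfun l n).1, hpos, (pfun l n).2, pfun_inv l hl n, rfl⟩
  · rintro (rfl | ⟨i, hi, k, hk, rfl⟩)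
    · exact ⟨0, mu_zero l⟩
    · obtain ⟨n, hn⟩ := pfun_surj l hl i k hk
      exact ⟨n, by simp [mu, hn]⟩

lemma period_mu (l : ℕ) (hl : 1 ≤ l) (i : ℕ) :
    period (mu l) i = {x : ℝ | ∃ k : ℕ, k < l ^ i ∧ x = (i : ℝ) + (k : ℝ) / (l : ℝ) ^ i} := by
  have hl' : (0:ℝ) < (l:ℝ) := by exact_mod_cast hl
  have hmem : ∀ x, (∃ n, mu l n = x) ↔ x ∈ Pset l := by
    intro x
    rw [← range_mu l hl]
    rfl
  ext x
  simp only [period, Set.mem_setOf_eq, hmem]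
  constructor
  · rintro ⟨hx, hle, hlt⟩
    rcases hx with rfl | ⟨j, hj, m, hm, rfl⟩
    · have : i = 0 := by
        by_contra h
        have : (1:ℝ) ≤ (i:ℝ) := by exact_mod_cast Nat.one_le_iff_ne_zero.mpr h
        linarith
      subst this
      exact ⟨0, by positivity, by norm_num⟩
    · have hpj : (0:ℝ) < (l:ℝ) ^ j := pow_pos hl' _
      have h1 : (0:ℝ) ≤ (m:ℝ) / (l:ℝ) ^ j := by positivity
      have h2 : (m:ℝ) / (l:ℝ) ^ j < 1 := by
        rw [div_lt_one hpj]
        exact_mod_cast hm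
      have hij : i = j := by
        have : (i:ℝ) < (j:ℝ) + 1 := by linarith
        have h3 : (j:ℝ) < (i:ℝ) + 1 := by linarith
        have := (by exact_mod_cast this : i < j + 1)
        have := (by exact_mod_cast h3 : j < i + 1)
        omega
      subst hij
      exact ⟨m, hm, rfl⟩
  · rintro ⟨k, hk, rfl⟩
    have hpi : (0:ℝ) < (l:ℝ) ^ i := pow_pos hl' _
    have h1 : (0:ℝ) ≤ (k:ℝ) / (l:ℝ) ^ i := by positivity
    have h2 : (k:ℝ) / (l:ℝ) ^ i < 1 := by
      rw [div_lt_one hpi]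
      exact_mod_cast hk
    refine ⟨?_, by linarith, by linarith⟩
    rcases Nat.eq_zero_or_pos i with rfl | hi
    · rw [pow_zero] at hk
      interval_cases k
      left
      norm_num
    · right
      exact ⟨i, hi, k, hk, rfl⟩

/-- Key additive closure step. -/
lemma key_add (l : ℕ) (hl : 2 ≤ l) (i d k m : ℕ) (hi : 0 < i)
    (hk : k < l ^ i) (hm : m < l ^ (i + d)) :
    ((i:ℝ) + (k:ℝ) / (l:ℝ) ^ i) + ((↑(i + d) : ℝ) + (m:ℝ) / (l:ℝ) ^ (i + d)) ∈ Pset l := by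
  have hl1 : 1 ≤ l := by omega
  have hl' : (0:ℝ) < (l:ℝ) := by exact_mod_cast hl1
  have hl0 : (l:ℝ) ≠ 0 := ne_of_gt hl'
  have hd1 : 1 ≤ l ^ d := Nat.one_le_pow _ _ hl1
  have hkd : k * l ^ d ≤ (l ^ i - 1) * l ^ d := Nat.mul_le_mul_right _ (by omega)
  have hsub : (l ^ i - 1) * l ^ d = l ^ (i + d) - l ^ d := by
    rw [Nat.sub_mul, one_mul, ← pow_add]
  have hK0lt : k * l ^ d + m < 2 * l ^ (i + d) := by
    have h1 : 1 ≤ l ^ (i + d) := Nat.one_le_pow _ _ hl1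
    omega
  by_cases hc : k * l ^ d + m < l ^ (i + d)
  · right
    refine ⟨i + (i + d), by omega, (k * l ^ d + m) * l ^ i, ?_, ?_⟩
    · calc (k * l ^ d + m) * l ^ i < l ^ (i + d) * l ^ i :=
          (Nat.mul_lt_mul_right (pow_pos (by omega : 0 < l) _)).mpr hc
        _ = l ^ (i + (i + d)) := by rw [← pow_add]; ring_nf
    · push_cast
      field_simp
      ring
  · right
    push_neg at hc
    refine ⟨i + (i + d) + 1, by omega, (k * l ^ d + m - l ^ (i + d)) * l ^ (i + 1), ?_, ?_⟩
    · calc (k * l ^ d + m - l ^ (i + d)) * l ^ (i + 1) < l ^ (i + d) * l ^ (i + 1) :=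
          (Nat.mul_lt_mul_right (pow_pos (by omega : 0 < l) _)).mpr (by omega)
        _ = l ^ (i + (i + d) + 1) := by rw [← pow_add]; ring_nf
    · have hcast : ((k * l ^ d + m - l ^ (i + d) : ℕ) : ℝ)
          = (k:ℝ) * (l:ℝ) ^ d + (m:ℝ) - (l:ℝ) ^ (i + d) := by
        push_cast [Nat.cast_sub hc]
        ring
      push_cast [hcast]
      field_simp
      ring

lemma Pset_add (l : ℕ) (hl : 2 ≤ l) :
    ∀ x ∈ Pset l, ∀ y ∈ Pset l, x + y ∈ Pset l := by
  rintro x hx y hy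
  rcases hx with rfl | ⟨i, hi, k, hk, rfl⟩
  · simpa using hy
  rcases hy with rfl | ⟨j, hj, m, hm, rfl⟩
  · rw [add_zero]; exact Or.inr ⟨i, hi, k, hk, rfl⟩
  rcases le_total i j with hij | hij
  · obtain ⟨d, rfl⟩ := Nat.exists_eq_add_of_le hij
    exact key_add l hl i d k m hi hk hm
  · obtain ⟨d, rfl⟩ := Nat.exists_eq_add_of_le hij
    rw [add_comm]
    exact key_add l hl j d m k hj hm hk

end PFM

/-- for every integer `l ≥ 2`, `P_l`, enumerated in increasing order, is a
normalized ℝ-mold of granularity `l`, fractal, with first period `{1, 1 + 1/l, …, 1 + (l-1)/l}`;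
in particular `P_l` is closed under addition. -/
theorem perfect_fractal_mold (l : ℕ) (hl : 2 ≤ l) :
    (∃ μ : ℕ → ℝ, Set.range μ = Pset l ∧ IsRMold μ ∧ μ 1 = 1 ∧
      (period μ 1).ncard = l ∧
      period μ 1 = {x : ℝ | ∃ k : ℕ, k < l ∧ x = 1 + (k : ℝ) / (l : ℝ)} ∧
      IsFractal μ) ∧
    (∀ x ∈ Pset l, ∀ y ∈ Pset l, x + y ∈ Pset l) := by
  have hl1 : 1 ≤ l := by omega
  have hl' : (0:ℝ) < (l:ℝ) := by exact_mod_cast hl1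
  have hl0 : (l:ℝ) ≠ 0 := ne_of_gt hl'
  refine ⟨⟨PFM.mu l, PFM.range_mu l hl1, ?_, PFM.mu_one l hl1, ?_, ?_, ?_⟩, PFM.Pset_add l hl⟩
  · -- IsRMold
    refine ⟨PFM.mu_strictMono l hl1, ?_, PFM.mu_zero l, ?_, ?_⟩
    · intro n
      have : (0:ℝ) < (l:ℝ) ^ (PFM.pfun l n).1 := pow_pos hl' _
      unfold PFM.mu
      positivity
    · -- small differences
      intro ε hε
      obtain ⟨i, hi⟩ := pow_unbounded_of_one_lt (1 / ε) (by exact_mod_cast hl : (1:ℝ) < l)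
      obtain ⟨n₀, hn₀⟩ := PFM.pfun_surj l hl1 i 0 (pow_pos (by omega : 0 < l) _)
      refine ⟨n₀, fun n hn => ?_⟩
      rw [PFM.mu_succ l hl1 n]
      have hmono : i ≤ (PFM.pfun l n).1 := by
        have := PFM.pfun_fst_mono l hn
        simpa [hn₀] using this
      have hle : (l:ℝ) ^ i ≤ (l:ℝ) ^ (PFM.pfun l n).1 :=
        pow_le_pow_right₀ (by exact_mod_cast hl1) hmono
      have hpi : (0:ℝ) < (l:ℝ) ^ i := pow_pos hl' _
      have hpn : (0:ℝ) < (l:ℝ) ^ (PFM.pfun l n).1 := pow_pos hl' _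
      have h1 : 1 / (l:ℝ) ^ (PFM.pfun l n).1 ≤ 1 / (l:ℝ) ^ i :=
        one_div_le_one_div_of_le hpi hle
      have h2 : 1 / (l:ℝ) ^ i < ε := by
        rw [div_lt_iff₀ hpi]
        rw [div_lt_iff₀ hε] at hi
        nlinarith
      linarith
    · -- closed under addition
      intro a b
      have ha : PFM.mu l a ∈ Pset l := by
        rw [← PFM.range_mu l hl1]; exact ⟨a, rfl⟩
      have hb : PFM.mu l b ∈ Pset l := by
        rw [← PFM.range_mu l hl1]; exact ⟨b, rfl⟩
      have := PFM.Pset_add l hl _ ha _ hb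
      rw [← PFM.range_mu l hl1] at this
      obtain ⟨n, hn⟩ := this
      exact ⟨n, hn⟩
  · -- ncard of first period
    have hper : period (PFM.mu l) 1 =
        ↑((Finset.range l).image fun k : ℕ => 1 + (k:ℝ) / (l:ℝ)) := by
      rw [PFM.period_mu l hl1 1]
      ext x
      simp only [Finset.coe_image, Finset.coe_range, Set.mem_image, Set.mem_Iio,
        Set.mem_setOf_eq, pow_one, Nat.cast_one]
      constructor
      · rintro ⟨k, hk, rfl⟩; exact ⟨k, hk, rfl⟩
      · rintro ⟨k, hk, rfl⟩; exact ⟨k, hk, rfl⟩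
    rw [hper, Set.ncard_coe_finset, Finset.card_image_of_injective, Finset.card_range]
    intro a b hab
    field_simp at hab
    have hab' : l + a = l + b := by exact_mod_cast hab
    omega
  · -- explicit first period
    rw [PFM.period_mu l hl1 1]
    simp [pow_one]
  · -- fractal
    refine ⟨fun i => l ^ i, fun i r => (r:ℝ) / (l:ℝ) ^ i, ?_, ?_, ?_, ?_, ?_, ?_⟩
    · intro i; exact pow_pos (by omega : 0 < l) _
    · intro i; simp
    · intro i
      rw [div_eq_one_iff_eq (by positivity)]
      norm_cast
    · intro i r s hrs _
      have hpi : (0:ℝ) < (l:ℝ) ^ i := pow_pos hl' _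
      rw [div_lt_div_iff₀ hpi hpi]
      have : (r:ℝ) < s := by exact_mod_cast hrs
      nlinarith
    · intro i
      rw [PFM.period_mu l hl1 i]
    · intro i
      rw [PFM.period_mu l hl1 (i + 1)]
      ext x
      simp only [Set.mem_setOf_eq]
      have hpi : (0:ℝ) < (l:ℝ) ^ i := pow_pos hl' _
      have iden : ∀ r s : ℕ, ((↑(r * l + s) : ℝ)) / (l:ℝ) ^ (i + 1) =
          (r:ℝ) / (l:ℝ) ^ i + (s:ℝ) / (l:ℝ) ^ 1 *
            ((↑(r + 1) : ℝ) / (l:ℝ) ^ i - (r:ℝ) / (l:ℝ) ^ i) := by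
        intro r s
        push_cast
        field_simp
        ring
      constructor
      · rintro ⟨k, hk, rfl⟩
        refine ⟨k / l, ?_, k % l, by simpa [pow_one] using Nat.mod_lt k (by omega), ?_⟩
        · rw [Nat.div_lt_iff_lt_mul (by omega)]
          calc k < l ^ (i + 1) := hk
            _ = l ^ i * l := pow_succ l i
        · have hdm0 : k / l * l + k % l = k := by
            rw [Nat.mul_comm]; exact Nat.div_add_mod k l
          have hdm : (k:ℝ) = ((k / l * l + k % l : ℕ) : ℝ) := by rw [hdm0]
          rw [hdm, iden (k / l) (k % l)]
          push_cast
          ring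
      · rintro ⟨r, hr, s, hs, rfl⟩
        rw [pow_one] at hs
        refine ⟨r * l + s, ?_, ?_⟩
        · have h1 : (r + 1) * l ≤ l ^ i * l := Nat.mul_le_mul_right _ hr
          have h2 : l ^ i * l = l ^ (i + 1) := (pow_succ l i).symm
          have h3 : (r + 1) * l = r * l + l := by ring
          omega
        · rw [iden r s]
          push_cast
          ring
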